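/- Let ψ and u be nonnegative nondecreasing functions on [0,∞), let (a_j)_{j≥0} be a complex sequence converging to L, and let θ ∈ (0,1). Then ψ(|L|)·u(|L|) ≤ ψ(|a₀|/(1−θ))·u(|L|) + sup_{k≥1} ψ(|a_k|/(1−θ))·u(|a_{k−1}−L|/θ). -/

import Mathlib

open Filter

theorem stmt3 (ψ u : ℝ → ENNReal) (hψ : Monotone ψ) (hu : Monotone u)
    (a : ℕ → ℂ) (L : ℂ) (ha : Tendsto a atTop (nhds L))
    (θ : ℝ) (hθ : θ ∈ Set.Ioo (0 : ℝ) 1) :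
    ψ (‖L‖) * u (‖L‖) ≤
      ψ (‖a 0‖ / (1 - θ)) * u (‖L‖) +
        ⨆ k : ℕ, ψ (‖a (k + 1)‖ / (1 - θ)) *
          u (‖a k - L‖ / θ) := by
  obtain ⟨hθ0, hθ1⟩ := hθ
  have h1θ : (0:ℝ) < 1 - θ := by linarith
  by_cases h0 : ‖L‖ ≤ ‖a 0‖ / (1 - θ)
  · calc ψ (‖L‖) * u (‖L‖)
        ≤ ψ (‖a 0‖ / (1 - θ)) * u (‖L‖) :=
          mul_le_mul_left (hψ h0) _
      _ ≤ _ := le_self_add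
  · -- here |a 0| < (1-θ)|L|, so |a 0 - L| > θ|L| and L ≠ 0
    have hL : ‖a 0‖ < (1 - θ) * ‖L‖ := by
      have h := not_le.mp h0
      rw [div_lt_iff₀ h1θ] at h; linarith
    have hLpos : 0 < ‖L‖ := by
      rcases (norm_nonneg (a 0)).lt_or_eq with h | h
      · nlinarith
      · nlinarith
    have hP : ∃ n, ‖a n - L‖ ≤ θ * ‖L‖ := by
      have := Metric.tendsto_atTop.mp ha (θ * ‖L‖) (by positivity)
      obtain ⟨N, hN⟩ := this
      exact ⟨N, by simpa [Complex.dist_eq] using (hN N le_rfl).le⟩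
    classical
    let k := Nat.find hP
    have hk : ‖a k - L‖ ≤ θ * ‖L‖ := Nat.find_spec hP
    have hk0 : k ≠ 0 := by
      intro h
      have : ‖a 0 - L‖ ≤ θ * ‖L‖ := by rw [← h]; exact hk
      obtain ⟨h4, h5⟩ := abs_le.mp (abs_norm_sub_norm_le (a 0) L)
      nlinarith
    obtain ⟨m, hm⟩ := Nat.exists_eq_succ_of_ne_zero hk0
    have hprev : ¬ ‖a m - L‖ ≤ θ * ‖L‖ := by
      apply Nat.find_min hP; omega
    have hprev' : θ * ‖L‖ < ‖a m - L‖ := not_le.mp hprev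
    -- |L| ≤ |a k| / (1-θ)
    have hak : (1 - θ) * ‖L‖ ≤ ‖a k‖ := by
      obtain ⟨h4, h5⟩ := abs_le.mp (abs_norm_sub_norm_le (a k) L)
      nlinarith
    have h1 : ‖L‖ ≤ ‖a k‖ / (1 - θ) :=
      (le_div_iff₀ h1θ).mpr (by linarith [hak])
    have h2 : ‖L‖ ≤ ‖a m - L‖ / θ :=
      (le_div_iff₀ hθ0).mpr (by nlinarith)
    calc ψ (‖L‖) * u (‖L‖)
        ≤ ψ (‖a (m + 1)‖ / (1 - θ)) * u (‖a m - L‖ / θ) := by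
          simp only [Nat.succ_eq_add_one] at hm
          rw [← hm]; exact mul_le_mul' (hψ h1) (hu h2)
      _ ≤ ⨆ k : ℕ, ψ (‖a (k + 1)‖ / (1 - θ)) *
          u (‖a k - L‖ / θ) := le_iSup_of_le m le_rfl
      _ ≤ _ := le_add_self
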